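/- Let V be a p-dimensional subspace of Euclidean space ℝ^N, let P be the orthogonal projection of ℝ^N onto V, let D : ℝ^N → ℝ^N be a linear map, and for t ∈ ℝ let V(t) = (I + tD)(V). Set X₀ = (I − P) ∘ D ∘ P. Then there is ε > 0 such that for |t| < ε the subspace V(t) has dimension p, the curve t ↦ P(V(t)) of orthogonal projections is differentiable at t = 0 with derivative X₀ + X₀ᵀ, and for every orthonormal basis e_1, ..., e_p of V the squared Frobenius norm of this derivative equals 2·Σ_{i=1}^{p} ‖(I − P)(D e_i)‖². (This is Lemma 1 of the paper: the speed ‖\dot V(0)‖ of a linear curve V(t) generated by e_i(t) = e_i + t d_i, d_i = D e_i, equals the norm ‖𝒱H D‖ of the horizontal components (d_i)^j, j > p, of the derivatives; the factor 2 accounts for the normalization of the projection embedding relative to the submersion metric on the Grassmannian.) -/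

import Mathlib

open Finset

/-- The orthogonal projection of `ℝ^N` onto a subspace `W`, as an endomorphism of `ℝ^N`. -/
noncomputable def projOnto {N : ℕ} (W : Submodule ℝ (EuclideanSpace ℝ (Fin N))) :
    EuclideanSpace ℝ (Fin N) →L[ℝ] EuclideanSpace ℝ (Fin N) :=
  W.subtypeL ∘L W.orthogonalProjectionOnto

/-- `X₀ = (I − P) ∘ D ∘ P`, where `P` is the orthogonal projection onto `V`. -/
noncomputable def Xzero {N : ℕ} (V : Submodule ℝ (EuclideanSpace ℝ (Fin N)))
    (D : EuclideanSpace ℝ (Fin N) →L[ℝ] EuclideanSpace ℝ (Fin N)) :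
    EuclideanSpace ℝ (Fin N) →L[ℝ] EuclideanSpace ℝ (Fin N) :=
  (1 - projOnto V) ∘L D ∘L projOnto V

open ContinuousLinearMap RealInnerProductSpace

section Aux

abbrev Euc (N : ℕ) := EuclideanSpace ℝ (Fin N)

section Aux
variable {N : ℕ} (V : Submodule ℝ (Euc N)) (D : Euc N →L[ℝ] Euc N)

lemma projOnto_mem (x : Euc N) : projOnto V x ∈ V := (V.orthogonalProjectionOnto x).2

lemma projOnto_eq_self {x : Euc N} (h : x ∈ V) : projOnto V x = x :=
  Submodule.starProjection_eq_self_iff.2 h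

@[simp] lemma projOnto_proj (x : Euc N) : projOnto V (projOnto V x) = projOnto V x :=
  projOnto_eq_self V (projOnto_mem V x)

@[simp] lemma adjoint_projOnto : adjoint (projOnto V) = projOnto V :=
  (isSelfAdjoint_starProjection V).adjoint_eq

noncomputable def Mop (t : ℝ) : Euc N →L[ℝ] Euc N := projOnto V + t • (D * projOnto V)
noncomputable def Mtop (t : ℝ) : Euc N →L[ℝ] Euc N := projOnto V + t • (projOnto V * adjoint D)
noncomputable def Bop : Euc N →L[ℝ] Euc N :=
  projOnto V * adjoint D * projOnto V + projOnto V * (D * projOnto V)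
noncomputable def Cop : Euc N →L[ℝ] Euc N := projOnto V * adjoint D * (D * projOnto V)
noncomputable def Gop (t : ℝ) : Euc N →L[ℝ] Euc N := 1 + (t • Bop V D + t ^ 2 • Cop V D)

lemma adjoint_Mop (t : ℝ) : adjoint (Mop V D t) = Mtop V D t := by
  rw [Mop, Mtop, ← star_eq_adjoint]
  simp [star_add, star_smul, star_mul, star_eq_adjoint, mul_assoc]

lemma MtM (t : ℝ) (x : Euc N) :
    Mtop V D t (Mop V D t x) = Gop V D t x - x + projOnto V x := by
  simp only [Mop, Mtop, Gop, Bop, Cop, add_apply, smul_apply, ContinuousLinearMap.mul_apply, ContinuousLinearMap.one_apply,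
    map_add, map_smul, projOnto_proj]
  simp only [smul_add, sq, mul_smul]
  abel

lemma oneSubP_G (t : ℝ) (x : Euc N) :
    Gop V D t x - projOnto V (Gop V D t x) = x - projOnto V x := by
  simp only [Gop, Bop, Cop, add_apply, smul_apply, ContinuousLinearMap.mul_apply, ContinuousLinearMap.one_apply,
    map_add, map_smul, projOnto_proj]
  simp only [smul_add, sq, mul_smul]
  abel


lemma proj_eq (t : ℝ) (h : IsUnit (Gop V D t)) :
    projOnto (Submodule.map (((1 : Euc N →L[ℝ] Euc N) + t • D : Euc N →L[ℝ] Euc N) : Euc N →ₗ[ℝ] Euc N) V) =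
      Mop V D t * Ring.inverse (Gop V D t) * Mtop V D t := by
  have hGinv : ∀ y : Euc N, Gop V D t (Ring.inverse (Gop V D t) y) = y := by
    intro y
    have h1 := DFunLike.congr_fun (Ring.mul_inverse_cancel _ h) y
    simpa [ContinuousLinearMap.mul_apply] using h1
  have hMmem : ∀ z : Euc N,
      Mop V D t z ∈ Submodule.map (((1 : Euc N →L[ℝ] Euc N) + t • D : Euc N →L[ℝ] Euc N) : Euc N →ₗ[ℝ] Euc N) V := by
    intro z
    have hz : Mop V D t z = ((1 : Euc N →L[ℝ] Euc N) + t • D) (projOnto V z) := by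
      simp [Mop, add_apply, smul_apply, ContinuousLinearMap.mul_apply, ContinuousLinearMap.one_apply]
    rw [hz]
    exact Submodule.mem_map_of_mem (projOnto_mem V z)
  have hMtV : ∀ z : Euc N, Mtop V D t z ∈ V := by
    intro z
    simp only [Mtop, add_apply, smul_apply, ContinuousLinearMap.mul_apply]
    exact V.add_mem (projOnto_mem V z) (V.smul_mem _ (projOnto_mem V _))
  refine ContinuousLinearMap.ext fun x => ?_
  have huV : projOnto V (Ring.inverse (Gop V D t) (Mtop V D t x))
      = Ring.inverse (Gop V D t) (Mtop V D t x) := by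
    have h1 := oneSubP_G V D t (Ring.inverse (Gop V D t) (Mtop V D t x))
    rw [hGinv, projOnto_eq_self V (hMtV x), sub_self] at h1
    exact (sub_eq_zero.1 h1.symm).symm
  have hMtq : Mtop V D t (Mop V D t (Ring.inverse (Gop V D t) (Mtop V D t x)))
      = Mtop V D t x := by
    rw [MtM, hGinv, huV]
    abel
  have key : (Submodule.orthogonalProjectionOnto (Submodule.map (((1 : Euc N →L[ℝ] Euc N) + t • D : Euc N →L[ℝ] Euc N) : Euc N →ₗ[ℝ] Euc N) V) x
      : Euc N) = Mop V D t (Ring.inverse (Gop V D t) (Mtop V D t x)) := by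
    refine Submodule.eq_starProjection_of_mem_of_inner_eq_zero (hMmem _) ?_
    intro w hw
    obtain ⟨v, hv, rfl⟩ := hw
    have hwM : (((1 : Euc N →L[ℝ] Euc N) + t • D : Euc N →L[ℝ] Euc N) : Euc N →ₗ[ℝ] Euc N) v = Mop V D t v := by
      simp [Mop, add_apply, smul_apply, ContinuousLinearMap.mul_apply, ContinuousLinearMap.one_apply, projOnto_eq_self V hv]
    rw [hwM, ← adjoint_inner_left, adjoint_Mop, map_sub, hMtq, sub_self, inner_zero_left]
  show (Submodule.map _ _).subtypeL.comp (Submodule.orthogonalProjectionOnto _) x = _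
  simpa only [comp_apply, Submodule.subtypeL_apply, ContinuousLinearMap.mul_apply] using key


lemma Xzero_eq : Xzero V D = (1 - projOnto V) * D * projOnto V := by
  rfl

lemma adjoint_Xzero : adjoint (Xzero V D) = projOnto V * adjoint D * (1 - projOnto V) := by
  rw [Xzero_eq, ← star_eq_adjoint]
  simp [star_mul, star_sub, star_one, star_eq_adjoint, mul_assoc]

lemma derivE :
    (D * projOnto V * 1 + projOnto V * -Bop V D) * projOnto V
      + projOnto V * 1 * (projOnto V * adjoint D)
      = Xzero V D + adjoint (Xzero V D) := by
  rw [adjoint_Xzero, Xzero_eq]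
  refine ContinuousLinearMap.ext fun x => ?_
  simp only [Bop, add_apply, ContinuousLinearMap.mul_apply, ContinuousLinearMap.one_apply, neg_apply, sub_apply, map_sub, map_neg,
    map_add, projOnto_proj, mul_one, one_mul]
  module

set_option maxHeartbeats 2000000 in
lemma hasDeriv_F :
    HasDerivAt (fun t : ℝ => Mop V D t * Ring.inverse (Gop V D t) * Mtop V D t)
      (Xzero V D + adjoint (Xzero V D)) 0 := by
  have hG0 : Gop V D 0 = 1 := by
    unfold Gop
    rw [zero_smul ℝ (Bop V D), zero_pow two_ne_zero, zero_smul ℝ (Cop V D), add_zero, add_zero]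
  have hM0 : Mop V D 0 = projOnto V := by
    unfold Mop
    rw [zero_smul ℝ (D * projOnto V), add_zero]
  have hMt0 : Mtop V D 0 = projOnto V := by
    unfold Mtop
    rw [zero_smul ℝ (projOnto V * adjoint D), add_zero]
  have hMd : HasDerivAt (fun t : ℝ => Mop V D t) (D * projOnto V) 0 := by
    have h1 : HasDerivAt (fun t : ℝ => t • (D * projOnto V)) (D * projOnto V) 0 := by
      simpa using (hasDerivAt_id (0 : ℝ)).smul_const (D * projOnto V)
    simpa [Mop] using h1.const_add (projOnto V)
  have hMtd : HasDerivAt (fun t : ℝ => Mtop V D t) (projOnto V * adjoint D) 0 := by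
    have h1 : HasDerivAt (fun t : ℝ => t • (projOnto V * adjoint D))
        (projOnto V * adjoint D) 0 := by
      simpa using (hasDerivAt_id (0 : ℝ)).smul_const (projOnto V * adjoint D)
    simpa [Mtop] using h1.const_add (projOnto V)
  have hGd : HasDerivAt (fun t : ℝ => Gop V D t) (Bop V D) 0 := by
    have h1 : HasDerivAt (fun t : ℝ => t • Bop V D) (Bop V D) 0 := by
      simpa using (hasDerivAt_id (0 : ℝ)).smul_const (Bop V D)
    have h2 : HasDerivAt (fun t : ℝ => t ^ 2 • Cop V D) (0 : Euc N →L[ℝ] Euc N) 0 := by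
      have := (hasDerivAt_pow 2 (0 : ℝ)).smul_const (Cop V D)
      simp at this
      exact this.congr_deriv (by exact zero_smul ℝ (Cop V D))
    have h3 := (h1.add h2).const_add (1 : Euc N →L[ℝ] Euc N)
    simpa [Gop] using h3
  have hIu : IsUnit (Gop V D 0) := by rw [hG0]; exact isUnit_one
  have hinv : HasDerivAt (fun t : ℝ => Ring.inverse (Gop V D t)) (-Bop V D) 0 := by
    have hd := hasFDerivAt_ringInverse (𝕜 := ℝ) hIu.unit
    rw [hIu.unit_spec] at hd
    have hcomp := hd.comp_hasDerivAt (0 : ℝ) hGd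
    have hcoe : ((hIu.unit⁻¹ : (Euc N →L[ℝ] Euc N)ˣ) : Euc N →L[ℝ] Euc N) = 1 := by
      rw [← Ring.inverse_unit, hIu.unit_spec, hG0, Ring.inverse_one]
    rw [hcoe] at hcomp
    simp only [ContinuousLinearMap.neg_apply, mulLeftRight_apply, one_mul, mul_one] at hcomp
    exact hcomp
  have h1 := hMd.mul hinv
  have h2 := h1.mul hMtd
  simp only [Pi.mul_def] at h2
  rw [hG0, hM0, hMt0, Ring.inverse_one] at h2
  rw [← derivE V D]
  exact h2


lemma Gop_cont : Continuous fun t : ℝ => Gop V D t := by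
  unfold Gop
  fun_prop

lemma Top_cont : Continuous fun t : ℝ => (1 : Euc N →L[ℝ] Euc N) + t • D := by
  fun_prop

lemma rank_eq (p : ℕ) (hV : Module.finrank ℝ V = p) (t : ℝ)
    (h : IsUnit ((1 : Euc N →L[ℝ] Euc N) + t • D)) :
    Module.finrank ℝ
      (Submodule.map (((1 : Euc N →L[ℝ] Euc N) + t • D : Euc N →L[ℝ] Euc N) : Euc N →ₗ[ℝ] Euc N) V) = p := by
  have hinj : Function.Injective ((1 : Euc N →L[ℝ] Euc N) + t • D) := by
    intro a b hab
    have h1 : (↑h.unit⁻¹ * ↑h.unit : Euc N →L[ℝ] Euc N) = 1 := h.unit.inv_mul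
    have h2 : ∀ z : Euc N, (↑h.unit⁻¹ : Euc N →L[ℝ] Euc N)
        (((1 : Euc N →L[ℝ] Euc N) + t • D) z) = z := by
      intro z
      have h3 := DFunLike.congr_fun h1 z
      rw [h.unit_spec] at h3
      simpa only [ContinuousLinearMap.mul_apply, ContinuousLinearMap.one_apply] using h3
    have := congrArg (↑h.unit⁻¹ : Euc N →L[ℝ] Euc N) hab
    rwa [h2, h2] at this
  rw [← hV]
  exact (LinearEquiv.finrank_eq
    (Submodule.equivMapOfInjective (((1 : Euc N →L[ℝ] Euc N) + t • D : Euc N →L[ℝ] Euc N) : Euc N →ₗ[ℝ] Euc N) hinj V)).symm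


lemma Gop_zero : Gop V D 0 = 1 := by
  unfold Gop
  rw [zero_smul ℝ (Bop V D), zero_pow two_ne_zero, zero_smul ℝ (Cop V D), add_zero, add_zero]

lemma parseval_b (b : OrthonormalBasis (Fin N) ℝ (Euc N)) (z : Euc N) :
    ∑ i : Fin N, ((inner ℝ (b i) (z) : ℝ)) ^ 2 = ‖z‖ ^ 2 := by
  have h1 := b.sum_inner_mul_inner z z
  rw [real_inner_self_eq_norm_sq] at h1
  rw [← h1]
  refine Finset.sum_congr rfl fun i _ => ?_
  rw [real_inner_comm z (b i), sq]

lemma X_X (z : Euc N) : Xzero V D (Xzero V D z) = 0 := by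
  simp [Xzero, comp_apply, sub_apply, ContinuousLinearMap.one_apply, map_sub, projOnto_proj, map_zero]

end Aux

/-- **Lemma 1 of the paper.**  Let `V` be a `p`-dimensional subspace of `ℝ^N` with
orthogonal projection `P`, let `D : ℝ^N → ℝ^N` be linear, and let `V(t) = (I + tD)(V)` be
the corresponding linear curve of subspaces.  Set `X₀ = (I − P) ∘ D ∘ P`.  Then for small
`t` the subspace `V(t)` is `p`-dimensional, the curve `t ↦ P(V(t))` of orthogonal
projections is differentiable at `t = 0` with derivative `X₀ + X₀ᵀ`, and for every
orthonormal basis `e₁, …, e_p` of `V` the squared Frobenius norm of this derivative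
(computed in any orthonormal basis of `ℝ^N`) equals `2 · Σᵢ ‖(I − P)(D eᵢ)‖²`. -/
theorem speed_of_linear_curve (N p : ℕ) (V : Submodule ℝ (EuclideanSpace ℝ (Fin N)))
    (hV : Module.finrank ℝ V = p)
    (D : EuclideanSpace ℝ (Fin N) →L[ℝ] EuclideanSpace ℝ (Fin N)) :
    ∃ ε > (0 : ℝ),
      (∀ t : ℝ, |t| < ε →
        Module.finrank ℝ
          (Submodule.map (((1 : EuclideanSpace ℝ (Fin N) →L[ℝ] EuclideanSpace ℝ (Fin N)) + t • D :
            EuclideanSpace ℝ (Fin N) →L[ℝ] EuclideanSpace ℝ (Fin N)) : EuclideanSpace ℝ (Fin N) →ₗ[ℝ] EuclideanSpace ℝ (Fin N)) V) = p) ∧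
      HasDerivAt
        (fun t : ℝ =>
          projOnto (Submodule.map (((1 : EuclideanSpace ℝ (Fin N) →L[ℝ] EuclideanSpace ℝ (Fin N)) + t • D :
            EuclideanSpace ℝ (Fin N) →L[ℝ] EuclideanSpace ℝ (Fin N)) : EuclideanSpace ℝ (Fin N) →ₗ[ℝ] EuclideanSpace ℝ (Fin N)) V))
        (Xzero V D + ContinuousLinearMap.adjoint (Xzero V D)) 0 ∧
      ∀ (b : OrthonormalBasis (Fin N) ℝ (EuclideanSpace ℝ (Fin N)))
        (e : Fin p → EuclideanSpace ℝ (Fin N)), Orthonormal ℝ e →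
        (∀ i, e i ∈ V) → Submodule.span ℝ (Set.range e) = V →
        ∑ i : Fin N, ∑ j : Fin N,
            (inner ℝ (b i)
              ((Xzero V D + ContinuousLinearMap.adjoint (Xzero V D)) (b j)) : ℝ) ^ 2
          = 2 * ∑ i : Fin p, ‖(1 - projOnto V) (D (e i))‖ ^ 2 := by
  classical
  have hnhds : {t : ℝ | IsUnit (Gop V D t)} ∩
      {t : ℝ | IsUnit ((1 : Euc N →L[ℝ] Euc N) + t • D)} ∈ nhds (0 : ℝ) := by
    have h1 : {t : ℝ | IsUnit (Gop V D t)} ∈ nhds (0 : ℝ) := by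
      refine (Units.isOpen.preimage (Gop_cont V D)).mem_nhds ?_
      show IsUnit (Gop V D 0)
      rw [Gop_zero]
      exact isUnit_one
    have h2 : {t : ℝ | IsUnit ((1 : Euc N →L[ℝ] Euc N) + t • D)} ∈ nhds (0 : ℝ) := by
      refine (Units.isOpen.preimage (Top_cont D)).mem_nhds ?_
      show IsUnit ((1 : Euc N →L[ℝ] Euc N) + (0 : ℝ) • D)
      rw [zero_smul ℝ D, add_zero]
      exact isUnit_one
    exact Filter.inter_mem h1 h2
  obtain ⟨ε, hε, hball⟩ := Metric.mem_nhds_iff.1 hnhds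
  refine ⟨ε, hε, ?_, ?_, ?_⟩
  · intro t ht
    have hmem : t ∈ {t : ℝ | IsUnit (Gop V D t)} ∩
        {t : ℝ | IsUnit ((1 : Euc N →L[ℝ] Euc N) + t • D)} := by
      refine hball ?_
      simpa [Metric.mem_ball, Real.dist_eq] using ht
    exact rank_eq V D p hV t hmem.2
  · have hev : (fun t : ℝ =>
        projOnto (Submodule.map (((1 : Euc N →L[ℝ] Euc N) + t • D : Euc N →L[ℝ] Euc N) : Euc N →ₗ[ℝ] Euc N) V)) =ᶠ[nhds (0 : ℝ)]
        (fun t : ℝ => Mop V D t * Ring.inverse (Gop V D t) * Mtop V D t) := by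
      filter_upwards [hnhds] with t ht
      exact proj_eq V D t ht.1
    exact (hasDeriv_F V D).congr_of_eventuallyEq hev
  · intro b e he hemem hspan
    have hcross : ∀ z w : Euc N,
        (inner ℝ (Xzero V D z) (ContinuousLinearMap.adjoint (Xzero V D) w) : ℝ) = 0 := by
      intro z w
      rw [ContinuousLinearMap.adjoint_inner_right, X_X]
      exact inner_zero_left w
    have hYnorm : ∀ z : Euc N,
        ‖(Xzero V D + ContinuousLinearMap.adjoint (Xzero V D)) z‖ ^ 2
          = ‖Xzero V D z‖ ^ 2 + ‖ContinuousLinearMap.adjoint (Xzero V D) z‖ ^ 2 := by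
      intro z
      rw [ContinuousLinearMap.add_apply, norm_add_sq_real, hcross]
      ring
    have hfro : ∀ T : Euc N →L[ℝ] Euc N,
        ∑ j : Fin N, ‖T (b j)‖ ^ 2
          = ∑ j : Fin N, ‖ContinuousLinearMap.adjoint T (b j)‖ ^ 2 := by
      intro T
      calc ∑ j : Fin N, ‖T (b j)‖ ^ 2
          = ∑ j : Fin N, ∑ i : Fin N, ((inner ℝ (b i) (T (b j)) : ℝ)) ^ 2 :=
            Finset.sum_congr rfl fun j _ => (parseval_b b _).symm
        _ = ∑ i : Fin N, ∑ j : Fin N,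
            ((inner ℝ (ContinuousLinearMap.adjoint T (b i)) (b j) : ℝ)) ^ 2 := by
            rw [Finset.sum_comm]
            refine Finset.sum_congr rfl fun i _ => Finset.sum_congr rfl fun j _ => ?_
            rw [ContinuousLinearMap.adjoint_inner_left]
        _ = ∑ i : Fin N, ‖ContinuousLinearMap.adjoint T (b i)‖ ^ 2 := by
            refine Finset.sum_congr rfl fun i _ => ?_
            rw [← parseval_b b (ContinuousLinearMap.adjoint T (b i))]
            exact Finset.sum_congr rfl fun j _ => by rw [real_inner_comm]
    have hVnorm : ∀ y : Euc N, y ∈ V → ‖y‖ ^ 2 = ∑ i : Fin p, ((inner ℝ (e i) (y) : ℝ)) ^ 2 := by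
      intro y hy
      rw [← hspan] at hy
      obtain ⟨c, rfl⟩ := (Submodule.mem_span_range_iff_exists_fun ℝ).1 hy
      have h1 : ∀ i, (inner ℝ (e i) (∑ j, c j • e j) : ℝ) = c i := fun i => he.inner_right_fintype c i
      have h2 : ‖∑ j, c j • e j‖ ^ 2 = ∑ j, (c j) ^ 2 := by
        rw [← real_inner_self_eq_norm_sq, he.inner_sum]
        exact Finset.sum_congr rfl fun j _ => by simp [sq]
      rw [h2]
      exact Finset.sum_congr rfl fun i _ => by rw [h1]
    have hXtV : ∀ z : Euc N, ContinuousLinearMap.adjoint (Xzero V D) z ∈ V := by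
      intro z
      rw [adjoint_Xzero]
      simp only [ContinuousLinearMap.mul_apply]
      exact projOnto_mem V _
    have step4 : ∑ j : Fin N, ‖ContinuousLinearMap.adjoint (Xzero V D) (b j)‖ ^ 2
        = ∑ i : Fin p, ‖Xzero V D (e i)‖ ^ 2 := by
      calc ∑ j : Fin N, ‖ContinuousLinearMap.adjoint (Xzero V D) (b j)‖ ^ 2
          = ∑ j : Fin N, ∑ i : Fin p,
              ((inner ℝ (e i) (ContinuousLinearMap.adjoint (Xzero V D) (b j)) : ℝ)) ^ 2 :=
            Finset.sum_congr rfl fun j _ => hVnorm _ (hXtV _)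
        _ = ∑ i : Fin p, ∑ j : Fin N, ((inner ℝ (Xzero V D (e i)) (b j) : ℝ)) ^ 2 := by
            rw [Finset.sum_comm]
            refine Finset.sum_congr rfl fun i _ => Finset.sum_congr rfl fun j _ => ?_
            rw [ContinuousLinearMap.adjoint_inner_right]
        _ = ∑ i : Fin p, ‖Xzero V D (e i)‖ ^ 2 := by
            refine Finset.sum_congr rfl fun i _ => ?_
            rw [← parseval_b b (Xzero V D (e i))]
            exact Finset.sum_congr rfl fun j _ => by rw [real_inner_comm]
    calc ∑ i : Fin N, ∑ j : Fin N,
          (inner ℝ (b i)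
            ((Xzero V D + ContinuousLinearMap.adjoint (Xzero V D)) (b j)) : ℝ) ^ 2
        = ∑ j : Fin N, ‖(Xzero V D + ContinuousLinearMap.adjoint (Xzero V D)) (b j)‖ ^ 2 := by
          rw [Finset.sum_comm]
          exact Finset.sum_congr rfl fun j _ => parseval_b b _
      _ = ∑ j : Fin N, ‖Xzero V D (b j)‖ ^ 2
          + ∑ j : Fin N, ‖ContinuousLinearMap.adjoint (Xzero V D) (b j)‖ ^ 2 := by
          rw [← Finset.sum_add_distrib]
          exact Finset.sum_congr rfl fun j _ => hYnorm _
      _ = 2 * ∑ i : Fin p, ‖Xzero V D (e i)‖ ^ 2 := by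
          rw [hfro (Xzero V D), step4]
          ring
      _ = 2 * ∑ i : Fin p, ‖(1 - projOnto V) (D (e i))‖ ^ 2 := by
          refine congrArg _ (Finset.sum_congr rfl fun i _ => ?_)
          rw [Xzero]
          simp only [comp_apply]
          rw [projOnto_eq_self V (hemem i)]
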